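/- Let f, g be real polynomials of degree at most 2 in n variables, and suppose there exists a point x' ∈ ℝⁿ with g(x') > 0. Then {x : g(x) ≥ 0} ⊆ {x : f(x) ≥ 0} if and only if there exists a real number t ≥ 0 such that f(x) - t·g(x) ≥ 0 for all x ∈ ℝⁿ. -/

import Mathlib

open MvPolynomial

lemma onedim_aux (a₂ a₁ a₀ b₂ p q : ℝ)
    (hFp : 0 ≤ a₂*p^2 + a₁*p + a₀) (hFq : 0 ≤ a₂*q^2 + a₁*q + a₀)
    (h0 : 0 < b₂*(p*q)) (h1 : b₂*((1-p)*(1-q)) < 0)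
    (hcase : (0 < b₂ ∧ p ≤ q) ∨ (b₂ < 0 ∧ q ≤ p)) :
    a₀ * (b₂ + (-(b₂*(p+q))) + b₂*(p*q)) ≤ (a₂ + a₁ + a₀) * (b₂*(p*q)) := by
  have hid : ((a₂ + a₁ + a₀) * (b₂*(p*q)) - a₀ * (b₂ + (-(b₂*(p+q))) + b₂*(p*q))) * (q - p)
      = b₂ * ((a₂*p^2 + a₁*p + a₀)*q*(q-1) + (a₂*q^2 + a₁*q + a₀)*p*(1-p)) := by ring
  rcases hcase with ⟨hb2, hpq⟩ | ⟨hb2, hpq⟩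
  · -- b₂ > 0 : 0 < p < 1 < q
    have hq1 : 1 < q := by
      by_contra hq
      push_neg at hq
      nlinarith [mul_nonneg (sub_nonneg.2 (hpq.trans hq)) (sub_nonneg.2 hq)]
    have hp1 : p < 1 := by
      by_contra hp
      push_neg at hp
      nlinarith [mul_nonneg (sub_nonneg.2 hp) (sub_nonneg.2 (hp.trans hpq))]
    have hp0 : 0 < p := by
      by_contra hp
      push_neg at hp
      nlinarith
    nlinarith [mul_nonneg (mul_nonneg hFp (by linarith : (0:ℝ) ≤ q)) (by linarith : (0:ℝ) ≤ q - 1),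
      mul_nonneg (mul_nonneg hFq hp0.le) (by linarith : (0:ℝ) ≤ 1 - p)]
  · -- b₂ < 0 : q < 0 < p < 1
    have hq0 : q < 0 := by
      by_contra hq
      push_neg at hq
      nlinarith [mul_nonneg (hq.trans hpq) hq]
    have hp0 : 0 < p := by
      by_contra hp
      push_neg at hp
      nlinarith [mul_nonneg (neg_nonneg.2 hp) (neg_nonneg.2 (hpq.trans hp))]
    have hp1 : p < 1 := by
      by_contra hp
      push_neg at hp
      nlinarith [mul_nonneg (sub_nonneg.2 hp) (by linarith : (0:ℝ) ≤ 1 - q)]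
    nlinarith [mul_nonneg (mul_nonneg hFp (neg_nonneg.2 hq0.le)) (by linarith : (0:ℝ) ≤ 1 - q),
      mul_nonneg (mul_nonneg hFq hp0.le) (by linarith : (0:ℝ) ≤ 1 - p)]

lemma onedim (a₂ a₁ a₀ b₂ b₁ b₀ : ℝ)
    (h : ∀ s : ℝ, 0 ≤ b₂*s^2 + b₁*s + b₀ → 0 ≤ a₂*s^2 + a₁*s + a₀)
    (h0 : 0 < b₀) (h1 : b₂ + b₁ + b₀ < 0) :
    a₀ * (b₂ + b₁ + b₀) ≤ (a₂ + a₁ + a₀) * b₀ := by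
  rcases eq_or_ne b₂ 0 with hb2 | hb2
  · -- linear case
    subst hb2
    have hb1 : b₁ < 0 := by linarith
    -- a₂ ≥ 0
    have ha2 : 0 ≤ a₂ := by
      by_contra ha
      push_neg at ha
      set M : ℝ := 1 + (|a₁| + |a₀|) / (-a₂) with hM
      have hM1 : 1 ≤ M := by
        rw [hM]
        have : 0 ≤ (|a₁| + |a₀|) / (-a₂) :=
          div_nonneg (by positivity) (by linarith)
        linarith
      have hMkey : (-a₂) * M = (-a₂) + |a₁| + |a₀| := by
        rw [hM]
        field_simp [hM, ha.ne]
        ring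
      have hGM : 0 ≤ 0*(-M)^2 + b₁*(-M) + b₀ := by nlinarith
      have hFM := h (-M) hGM
      have e1 : a₂*(-M)^2 + a₁*(-M) + a₀ = -(((-a₂)*M)*M) - a₁*M + a₀ := by ring
      rw [e1, hMkey] at hFM
      nlinarith [le_abs_self a₁, neg_abs_le a₁, le_abs_self a₀, neg_abs_le a₀]
    -- root r = b₀ / (-b₁)
    set r : ℝ := b₀ / (-b₁) with hr
    have hGr : 0*r^2 + b₁*r + b₀ = 0 := by
      rw [hr]
      field_simp [hr, hb1.ne]
      ring
    have hFr := h r (le_of_eq hGr.symm)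
    have h2 : 0 ≤ a₂*b₀^2 - a₁*b₀*b₁ + a₀*b₁^2 := by
      have h3 : (a₂*r^2 + a₁*r + a₀) * b₁^2 = a₂*b₀^2 - a₁*b₀*b₁ + a₀*b₁^2 := by
        rw [hr]
        field_simp [hr, hb1.ne]
        ring
      nlinarith [mul_nonneg hFr (sq_nonneg b₁)]
    nlinarith [mul_nonneg (mul_nonneg ha2 h0.le) (by linarith : (0:ℝ) ≤ -(b₀ + b₁))]
  · -- quadratic case
    have hΔ : 0 < b₁^2 - 4*b₂*b₀ := by
      rcases lt_or_gt_of_ne hb2 with hneg | hpos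
      · nlinarith [sq_nonneg b₁]
      · nlinarith [sq_nonneg (2*b₂ + b₁)]
    set sq : ℝ := Real.sqrt (b₁^2 - 4*b₂*b₀) with hsqdef
    have hsq : sq^2 = b₁^2 - 4*b₂*b₀ := Real.sq_sqrt hΔ.le
    have hsqpos : 0 < sq := Real.sqrt_pos.2 hΔ
    set p : ℝ := (-b₁ - sq)/(2*b₂) with hp
    set q : ℝ := (-b₁ + sq)/(2*b₂) with hq
    have hb1 : b₁ = -(b₂*(p+q)) := by
      rw [hp, hq]
      field_simp [hp, hq]
      ring
    have hb0 : b₀ = b₂*(p*q) := by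
      rw [hp, hq]
      field_simp
      nlinarith [hsq]
    have hGp : b₂*p^2 + b₁*p + b₀ = 0 := by
      rw [hb1, hb0]; ring
    have hGq : b₂*q^2 + b₁*q + b₀ = 0 := by
      rw [hb1, hb0]; ring
    have hFp := h p (le_of_eq hGp.symm)
    have hFq := h q (le_of_eq hGq.symm)
    have h0' : 0 < b₂*(p*q) := hb0 ▸ h0
    have h1' : b₂*((1-p)*(1-q)) < 0 := by nlinarith [h1, hb1, hb0]
    have hqp : q - p = sq / b₂ := by
      rw [hp, hq]
      field_simp [hp, hq]
      ring
    have hcase : (0 < b₂ ∧ p ≤ q) ∨ (b₂ < 0 ∧ q ≤ p) := by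
      rcases lt_or_gt_of_ne hb2 with hneg | hpos
      · right
        refine ⟨hneg, ?_⟩
        have : sq / b₂ ≤ 0 := div_nonpos_of_nonneg_of_nonpos hsqpos.le hneg.le
        linarith [hqp ▸ this]
      · left
        refine ⟨hpos, ?_⟩
        have : 0 ≤ sq / b₂ := div_nonneg hsqpos.le hpos.le
        linarith [hqp ▸ this]
    have := onedim_aux a₂ a₁ a₀ b₂ p q hFp hFq h0' h1' hcase
    calc a₀ * (b₂ + b₁ + b₀) = a₀ * (b₂ + (-(b₂*(p+q))) + b₂*(p*q)) := by rw [hb1, hb0]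
      _ ≤ (a₂ + a₁ + a₀) * (b₂*(p*q)) := this
      _ = (a₂ + a₁ + a₀) * b₀ := by rw [hb0]

lemma line_quad (n : ℕ) (h : MvPolynomial (Fin n) ℝ) (hdeg : h.totalDegree ≤ 2)
    (x y : Fin n → ℝ) :
    ∃ c₂ c₁ c₀ : ℝ, ∀ s : ℝ,
      eval (fun i => x i + s * (y i - x i)) h = c₂*s^2 + c₁*s + c₀ := by
  set φ : Fin n → Polynomial ℝ := fun i => Polynomial.C (x i) + Polynomial.C (y i - x i) * Polynomial.X with hφ
  set q : Polynomial ℝ := MvPolynomial.aeval φ h with hq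
  have heval : ∀ s : ℝ, Polynomial.eval s q = eval (fun i => x i + s * (y i - x i)) h := by
    intro s
    have h1 : Polynomial.eval s q = Polynomial.aeval s q := by
      rw [Polynomial.coe_aeval_eq_eval]
    rw [h1, hq, MvPolynomial.comp_aeval_apply]
    have h2 : (fun i => Polynomial.aeval s (φ i)) = fun i => x i + s * (y i - x i) := by
      funext i
      simp [hφ]
      ring
    rw [h2]
    have h3 := MvPolynomial.coe_aeval_eq_eval (f := fun i => x i + s * (y i - x i)) (S₁ := ℝ)
    calc MvPolynomial.aeval (fun i => x i + s * (y i - x i)) h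
        = (RingHomClass.toRingHom (MvPolynomial.aeval (fun i => x i + s * (y i - x i)) :
            MvPolynomial (Fin n) ℝ →ₐ[ℝ] ℝ)) h := rfl
      _ = eval (fun i => x i + s * (y i - x i)) h := by rw [h3]
  have hdeg' : q.natDegree ≤ 2 := by
    rw [hq, MvPolynomial.aeval_def, MvPolynomial.eval₂_eq]
    simp only [Polynomial.algebraMap_eq]
    refine (Polynomial.natDegree_sum_le _ _).trans ?_
    rw [Finset.fold_max_le]
    refine ⟨by norm_num, ?_⟩
    intro d hd
    refine le_trans (Polynomial.natDegree_C_mul_le _ _) ?_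
    calc (∏ i ∈ d.support, φ i ^ d i).natDegree
        ≤ ∑ i ∈ d.support, (φ i ^ d i).natDegree := Polynomial.natDegree_prod_le _ _
      _ ≤ ∑ i ∈ d.support, d i := by
          refine Finset.sum_le_sum (fun i _ => ?_)
          have h1 : (φ i).natDegree ≤ 1 := by
            refine (Polynomial.natDegree_add_le _ _).trans ?_
            simp only [Polynomial.natDegree_C, Nat.max_le, Nat.zero_le, true_and]
            exact (Polynomial.natDegree_C_mul_le _ _).trans Polynomial.natDegree_X_le
          calc (φ i ^ d i).natDegree ≤ d i * (φ i).natDegree := Polynomial.natDegree_pow_le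
            _ ≤ d i * 1 := Nat.mul_le_mul_left _ h1
            _ = d i := Nat.mul_one _
      _ = d.sum (fun _ e => e) := rfl
      _ ≤ h.totalDegree := MvPolynomial.le_totalDegree hd
      _ ≤ 2 := hdeg
  refine ⟨q.coeff 2, q.coeff 1, q.coeff 0, fun s => ?_⟩
  rw [← heval s]
  rw [Polynomial.eval_eq_sum_range' (Nat.lt_succ_of_le hdeg')]
  simp [Finset.sum_range_succ]
  ring

lemma pairwise_ineq (n : ℕ) (f g : MvPolynomial (Fin n) ℝ)
    (hf : f.totalDegree ≤ 2) (hg : g.totalDegree ≤ 2)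
    (hyp : ∀ z : Fin n → ℝ, 0 ≤ eval z g → 0 ≤ eval z f)
    (x y : Fin n → ℝ) (hx : 0 < eval x g) (hy : eval y g < 0) :
    eval x f * eval y g ≤ eval y f * eval x g := by
  obtain ⟨a₂, a₁, a₀, hF⟩ := line_quad n f hf x y
  obtain ⟨b₂, b₁, b₀, hG⟩ := line_quad n g hg x y
  have hline0 : (fun i => x i + (0:ℝ) * (y i - x i)) = x := by funext i; ring
  have hline1 : (fun i => x i + (1:ℝ) * (y i - x i)) = y := by funext i; ring
  have hfx : eval x f = a₀ := by have := hF 0; rw [hline0] at this; linarith [this]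
  have hfy : eval y f = a₂ + a₁ + a₀ := by have := hF 1; rw [hline1] at this; linarith [this]
  have hgx : eval x g = b₀ := by have := hG 0; rw [hline0] at this; linarith [this]
  have hgy : eval y g = b₂ + b₁ + b₀ := by have := hG 1; rw [hline1] at this; linarith [this]
  have h1d : ∀ s : ℝ, 0 ≤ b₂*s^2 + b₁*s + b₀ → 0 ≤ a₂*s^2 + a₁*s + a₀ := by
    intro s hs
    have := hyp (fun i => x i + s * (y i - x i)) (by rw [hG s]; exact hs)
    rw [hF s] at this
    exact this
  have := onedim a₂ a₁ a₀ b₂ b₁ b₀ h1d (hgx ▸ hx) (hgy ▸ hy)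
  rw [hfx, hfy, hgx, hgy]
  linarith

lemma div_key {fx gy fy gx : ℝ} (hx : 0 < gx) (hy : gy < 0)
    (hpw : fx * gy ≤ fy * gx) : fy / gy ≤ fx / gx := by
  rw [div_le_iff_of_neg hy, div_mul_eq_mul_div, div_le_iff₀ hx]
  exact hpw

theorem stmt_1 (n : ℕ) (f g : MvPolynomial (Fin n) ℝ)
    (hf : f.totalDegree ≤ 2) (hg : g.totalDegree ≤ 2)
    (x' : Fin n → ℝ) (hx' : 0 < eval x' g) :
    {x : Fin n → ℝ | 0 ≤ eval x g} ⊆ {x : Fin n → ℝ | 0 ≤ eval x f} ↔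
      ∃ t : ℝ, 0 ≤ t ∧ ∀ x : Fin n → ℝ, 0 ≤ eval x f - t * eval x g := by
  constructor
  · intro hsub
    have hyp : ∀ z : Fin n → ℝ, 0 ≤ eval z g → 0 ≤ eval z f := fun z hz => hsub hz
    by_cases hneg : ∃ y, eval y g < 0
    · obtain ⟨y₀, hy₀⟩ := hneg
      set S : Set ℝ := {r | ∃ y, eval y g < 0 ∧ r = eval y f / eval y g} with hS
      have hSne : S.Nonempty := ⟨_, y₀, hy₀, rfl⟩
      have hub : ∀ r ∈ S, ∀ z : Fin n → ℝ, 0 < eval z g → r ≤ eval z f / eval z g := by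
        rintro r ⟨y, hy, rfl⟩ z hz
        exact div_key hz hy (pairwise_ineq n f g hf hg hyp z y hz hy)
      have hbdd : BddAbove S := ⟨eval x' f / eval x' g, fun r hr => hub r hr x' hx'⟩
      refine ⟨max 0 (sSup S), le_max_left _ _, fun x => ?_⟩
      rcases lt_trichotomy (eval x g) 0 with hgx | hgx | hgx
      · have h1 : eval x f / eval x g ≤ sSup S := le_csSup hbdd ⟨x, hgx, rfl⟩
        have h2 : eval x f / eval x g ≤ max 0 (sSup S) := h1.trans (le_max_right _ _)
        rw [div_le_iff_of_neg hgx] at h2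
        linarith
      · have := hyp x (le_of_eq hgx.symm)
        rw [hgx]
        linarith
      · have h0 : (0:ℝ) ≤ eval x f / eval x g := div_nonneg (hyp x hgx.le) hgx.le
        have h1 : sSup S ≤ eval x f / eval x g := csSup_le hSne (fun r hr => hub r hr x hgx)
        have ht : max 0 (sSup S) ≤ eval x f / eval x g := max_le h0 h1
        rw [le_div_iff₀ hgx] at ht
        linarith
    · push_neg at hneg
      refine ⟨0, le_refl 0, fun x => ?_⟩
      have := hyp x (hneg x)
      linarith
  · rintro ⟨t, ht, hineq⟩ x hx
    simp only [Set.mem_setOf_eq] at hx ⊢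
    have h1 := hineq x
    nlinarith [mul_nonneg ht hx]
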